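/- Every Hamiltonian cycle on S that conforms to T has weight at most twice the minimum weight of a Hamiltonian cycle on S. -/

import Mathlib

/-- A rooted tree on a vertex type `V`, given by a parent function under which
every vertex reaches the root. -/
structure ParentTree (V : Type) where
  root : V
  parent : V → V
  parent_root : parent root = root
  reaches_root : ∀ v, ∃ k, parent^[k] v = root

namespace ParentTree

variable {V : Type}

/-- The set `C(u)` of children of `u`. -/
def children (T : ParentTree V) (u : V) : Set V := {v | T.parent v = u ∧ v ≠ u}

/-- The set `T(u)` of descendants of `u` (including `u` itself). -/
def desc (T : ParentTree V) (u : V) : Set V := {b | ∃ k, T.parent^[k] b = u}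

/-- For a set `U` of siblings, `T(U) = ⋃_{u ∈ U} T(u)`. -/
def descU (T : ParentTree V) (U : Set V) : Set V := ⋃ u ∈ U, T.desc u

end ParentTree

/-- The set of points occurring in a list. -/
def listSet {V : Type} (l : List V) : Set V := {x | x ∈ l}

/-- The weight of a Hamiltonian cycle given as a list: the sum of distances
over cyclically consecutive pairs. -/
def cycleWeight {V X : Type} [MetricSpace X] (f : V → X) (h : List V) : ℝ :=
  ((h.zip (h.rotate 1)).map fun p => dist (f p.1) (f p.2)).sum

/-- A Hamiltonian cycle on the point set: a cyclic ordering of all points,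
represented as a duplicate-free list containing every point. -/
def IsHamCycle {V : Type} (h : List V) : Prop := h.Nodup ∧ ∀ x : V, x ∈ h

/-- The set `A` forms a contiguous cyclic arc of the cycle `h`. -/
def IsCyclicArc {V : Type} (A : Set V) (h : List V) : Prop :=
  ∃ i : ℕ, listSet ((h.rotate i).take A.ncard) = A

/-- A Hamiltonian cycle conforms to the rooted tree `T` if for every node `u`
the set `T(u)` of descendants of `u` forms a contiguous cyclic arc of the cycle. -/
def CycleConforms {V : Type} (T : ParentTree V) (h : List V) : Prop :=
  ∀ u : V, IsCyclicArc (T.desc u) h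

/-- The total weight of the tree `T`: the sum of distances over its edges. -/
noncomputable def treeWeight {V X : Type} [Fintype V] [DecidableEq V] [MetricSpace X]
    (T : ParentTree V) (f : V → X) : ℝ :=
  ∑ v ∈ Finset.univ.filter (fun v => v ≠ T.root), dist (f v) (f (T.parent v))

/-- `T` is a minimum spanning tree: among all trees with the same vertex set it
minimizes the sum of distances over its edges. -/
def IsMST {V X : Type} [Fintype V] [DecidableEq V] [MetricSpace X]
    (T : ParentTree V) (f : V → X) : Prop :=
  ∀ T' : ParentTree V, treeWeight T f ≤ treeWeight T' f

namespace ParentTree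
variable {V : Type}

lemma iterate_root (T : ParentTree V) (k : ℕ) : T.parent^[k] T.root = T.root :=
  Function.iterate_fixed T.parent_root k

lemma eq_root_of_periodic (T : ParentTree V) {x : V} {p : ℕ} (hp : 0 < p)
    (hx : T.parent^[p] x = x) : x = T.root := by
  have hper : ∀ t, T.parent^[p * t] x = x := by
    intro t; induction t with
    | zero => simp
    | succ t ih =>
      rw [Nat.mul_succ, Function.iterate_add_apply, hx, ih]
  obtain ⟨K, hK⟩ := T.reaches_root x
  have h1 : K ≤ p * K := Nat.le_mul_of_pos_left K hp
  calc x = T.parent^[p * K] x := (hper K).symm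
    _ = T.parent^[p * K - K] (T.parent^[K] x) := by
        rw [← Function.iterate_add_apply, Nat.sub_add_cancel h1]
    _ = T.root := by rw [hK, iterate_root]

lemma exists_iter_eq_root (T : ParentTree V) {x : V} {i j : ℕ} (hij : i < j)
    (he : T.parent^[i] x = T.parent^[j] x) : ∃ s < j, T.parent^[s] x = T.root := by
  set c := T.parent^[i] x with hc
  have hp : 0 < j - i := by omega
  have hcyc : T.parent^[j - i] c = c := by
    rw [hc, ← Function.iterate_add_apply, Nat.sub_add_cancel hij.le, ← he]
  have hper : ∀ t, T.parent^[(j - i) * t] c = c := by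
    intro t; induction t with
    | zero => simp
    | succ t ih => rw [Nat.mul_succ, Function.iterate_add_apply, hcyc, ih]
  obtain ⟨K, hK⟩ := T.reaches_root x
  by_cases hKi : K ≤ i
  · refine ⟨i, hij, ?_⟩
    calc T.parent^[i] x = T.parent^[i - K] (T.parent^[K] x) := by
          rw [← Function.iterate_add_apply, Nat.sub_add_cancel hKi]
      _ = T.root := by rw [hK, iterate_root]
  · push_neg at hKi
    set d := K - i with hd
    refine ⟨i + d % (j - i), by have := Nat.mod_lt d hp; omega, ?_⟩
    have h1 : T.parent^[i + d % (j-i)] x = T.parent^[d % (j-i)] c := by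
      rw [hc, ← Function.iterate_add_apply, Nat.add_comm]
    rw [h1]
    calc T.parent^[d % (j-i)] c
        = T.parent^[d % (j-i)] (T.parent^[(j-i) * (d / (j-i))] c) := by rw [hper]
      _ = T.parent^[d % (j-i) + (j-i) * (d / (j-i))] c := by
          rw [← Function.iterate_add_apply]
      _ = T.parent^[d] c := by rw [Nat.mod_add_div]
      _ = T.parent^[K] x := by rw [hc, ← Function.iterate_add_apply, hd,
          Nat.sub_add_cancel hKi.le]
      _ = T.root := hK

lemma mem_desc_root (T : ParentTree V) (b : V) : b ∈ T.desc T.root := T.reaches_root b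

lemma self_mem_desc (T : ParentTree V) (b : V) : b ∈ T.desc b := ⟨0, rfl⟩

lemma desc_trans (T : ParentTree V) {b v w : V} (h1 : b ∈ T.desc v) (h2 : v ∈ T.desc w) :
    b ∈ T.desc w := by
  obtain ⟨k, hk⟩ := h1; obtain ⟨j, hj⟩ := h2
  exact ⟨j + k, by rw [Function.iterate_add_apply, hk, hj]⟩

end ParentTree

def crossP {V : Type} (T : ParentTree V) (a b v : V) : Prop :=
  (a ∈ T.desc v ∧ b ∉ T.desc v) ∨ (b ∈ T.desc v ∧ a ∉ T.desc v)

lemma crossP_root_false {V : Type} (T : ParentTree V) (a b : V) : ¬ crossP T a b T.root := by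
  intro hc
  rcases hc with ⟨_, hb⟩ | ⟨_, ha⟩
  · exact hb (T.mem_desc_root b)
  · exact ha (T.mem_desc_root a)

lemma dist_iter_le {V X : Type} [MetricSpace X] (T : ParentTree V) (f : V → X) (x : V) (k : ℕ) :
    dist (f x) (f (T.parent^[k] x)) ≤
      ∑ j ∈ Finset.range k, dist (f (T.parent^[j] x)) (f (T.parent^[j+1] x)) := by
  induction k with
  | zero => simp
  | succ k ih =>
    rw [Finset.sum_range_succ]
    calc dist (f x) (f (T.parent^[k+1] x))
        ≤ dist (f x) (f (T.parent^[k] x)) + dist (f (T.parent^[k] x)) (f (T.parent^[k+1] x)) :=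
          dist_triangle _ _ _
      _ ≤ _ := by exact add_le_add ih le_rfl

open Classical in
noncomputable def crossSum {V X : Type} [Fintype V] [MetricSpace X]
    (T : ParentTree V) (f : V → X) (a b : V) : ℝ :=
  ∑ v ∈ Finset.univ.filter (fun v => crossP T a b v), dist (f v) (f (T.parent v))

open Classical in
lemma dist_le_crossSum {V X : Type} [Fintype V] [MetricSpace X]
    (T : ParentTree V) (f : V → X) (a b : V) :
    dist (f a) (f b) ≤ crossSum T f a b := by
  -- minimal k with parent^[k] a an ancestor of b
  have hPa : ∃ k, b ∈ T.desc (T.parent^[k] a) := by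
    obtain ⟨k, hk⟩ := T.reaches_root a
    exact ⟨k, by rw [hk]; exact T.mem_desc_root b⟩
  have hPb : ∃ k, a ∈ T.desc (T.parent^[k] b) := by
    obtain ⟨k, hk⟩ := T.reaches_root b
    exact ⟨k, by rw [hk]; exact T.mem_desc_root a⟩
  set ka := Nat.find hPa with hka
  set kb := Nat.find hPb with hkb
  set m := T.parent^[ka] a with hm
  set m' := T.parent^[kb] b with hm'
  have hmb : b ∈ T.desc m := Nat.find_spec hPa
  have hm'a : a ∈ T.desc m' := Nat.find_spec hPb
  -- m = m'
  have hmm : m = m' := by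
    obtain ⟨t, ht⟩ := hmb
    have htkb : kb ≤ t := by
      apply Nat.find_le
      rw [ht]; exact ⟨ka, hm.symm⟩
    obtain ⟨t', ht'⟩ := hm'a
    have ht'ka : ka ≤ t' := by
      apply Nat.find_le
      rw [ht']; exact ⟨kb, hm'.symm⟩
    -- m = parent^[t - kb] m',  m' = parent^[t' - ka] m
    have e1 : T.parent^[t - kb] m' = m := by
      rw [hm', ← Function.iterate_add_apply, Nat.sub_add_cancel htkb, ht]
    have e2 : T.parent^[t' - ka] m = m' := by
      rw [hm, ← Function.iterate_add_apply, Nat.sub_add_cancel ht'ka, ht']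
    by_cases hz : t - kb + (t' - ka) = 0
    · have h1 : t' - ka = 0 := by omega
      rw [← e2, h1]; rfl
    · have hper : T.parent^[t - kb + (t' - ka)] m = m := by
        rw [Function.iterate_add_apply, e2, e1]
      have hroot : m = T.root := T.eq_root_of_periodic (Nat.pos_of_ne_zero hz) hper
      have : m' = T.root := by rw [← e2, hroot, T.iterate_root]
      rw [hroot, this]
  -- characterization of the two edge sets
  have hchar_a : ∀ j : ℕ, (b ∉ T.desc (T.parent^[j] a)) ↔ j < ka := by
    intro j
    constructor
    · intro hb
      by_contra hge
      push_neg at hge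
      apply hb
      have h2 : m ∈ T.desc (T.parent^[j] a) := by
        refine ⟨j - ka, ?_⟩
        rw [hm, ← Function.iterate_add_apply, Nat.sub_add_cancel hge]
      exact T.desc_trans hmb h2
    · intro hj
      exact Nat.find_min hPa hj
  have hchar_b : ∀ j : ℕ, (a ∉ T.desc (T.parent^[j] b)) ↔ j < kb := by
    intro j
    constructor
    · intro hb
      by_contra hge
      push_neg at hge
      apply hb
      have h2 : m' ∈ T.desc (T.parent^[j] b) := by
        refine ⟨j - kb, ?_⟩
        rw [hm', ← Function.iterate_add_apply, Nat.sub_add_cancel hge]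
      exact T.desc_trans hm'a h2
    · intro hj
      exact Nat.find_min hPb hj
  -- injectivity of the chains
  have hinj_a : Set.InjOn (fun j => T.parent^[j] a) (Finset.range ka) := by
    intro i hi j hj hij
    simp only [Finset.coe_range, Set.mem_Iio] at hi hj
    by_contra hne
    rcases lt_or_gt_of_ne hne with hlt | hlt
    · obtain ⟨s, hs, hsr⟩ := T.exists_iter_eq_root hlt hij
      have : b ∈ T.desc (T.parent^[s] a) := by rw [hsr]; exact T.mem_desc_root b
      exact absurd this ((hchar_a s).mpr (by omega))
    · obtain ⟨s, hs, hsr⟩ := T.exists_iter_eq_root hlt hij.symm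
      have : b ∈ T.desc (T.parent^[s] a) := by rw [hsr]; exact T.mem_desc_root b
      exact absurd this ((hchar_a s).mpr (by omega))
  have hinj_b : Set.InjOn (fun j => T.parent^[j] b) (Finset.range kb) := by
    intro i hi j hj hij
    simp only [Finset.coe_range, Set.mem_Iio] at hi hj
    by_contra hne
    rcases lt_or_gt_of_ne hne with hlt | hlt
    · obtain ⟨s, hs, hsr⟩ := T.exists_iter_eq_root hlt hij
      have : a ∈ T.desc (T.parent^[s] b) := by rw [hsr]; exact T.mem_desc_root a
      exact absurd this ((hchar_b s).mpr (by omega))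
    · obtain ⟨s, hs, hsr⟩ := T.exists_iter_eq_root hlt hij.symm
      have : a ∈ T.desc (T.parent^[s] b) := by rw [hsr]; exact T.mem_desc_root a
      exact absurd this ((hchar_b s).mpr (by omega))
  -- image identities
  set Eab := Finset.univ.filter (fun v => a ∈ T.desc v ∧ b ∉ T.desc v) with hEab
  set Eba := Finset.univ.filter (fun v => b ∈ T.desc v ∧ a ∉ T.desc v) with hEba
  have himg_a : (Finset.range ka).image (fun j => T.parent^[j] a) = Eab := by
    ext v
    simp only [Finset.mem_image, Finset.mem_range, hEab, Finset.mem_filter,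
      Finset.mem_univ, true_and]
    constructor
    · rintro ⟨j, hj, rfl⟩
      exact ⟨⟨j, rfl⟩, (hchar_a j).mpr hj⟩
    · rintro ⟨⟨j, hj⟩, hb⟩
      refine ⟨j, ?_, hj⟩
      rw [← hchar_a j, hj]
      exact hb
  have himg_b : (Finset.range kb).image (fun j => T.parent^[j] b) = Eba := by
    ext v
    simp only [Finset.mem_image, Finset.mem_range, hEba, Finset.mem_filter,
      Finset.mem_univ, true_and]
    constructor
    · rintro ⟨j, hj, rfl⟩
      exact ⟨⟨j, rfl⟩, (hchar_b j).mpr hj⟩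
    · rintro ⟨⟨j, hj⟩, hb⟩
      refine ⟨j, ?_, hj⟩
      rw [← hchar_b j, hj]
      exact hb
  have hsum_a : dist (f a) (f m) ≤ ∑ v ∈ Eab, dist (f v) (f (T.parent v)) := by
    rw [← himg_a, Finset.sum_image hinj_a]
    refine le_trans (dist_iter_le T f a ka) (le_of_eq ?_)
    apply Finset.sum_congr rfl
    intro j _
    rw [Function.iterate_succ_apply']
  have hsum_b : dist (f b) (f m) ≤ ∑ v ∈ Eba, dist (f v) (f (T.parent v)) := by
    rw [← himg_b, Finset.sum_image hinj_b, hmm]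
    refine le_trans (dist_iter_le T f b kb) (le_of_eq ?_)
    apply Finset.sum_congr rfl
    intro j _
    rw [Function.iterate_succ_apply']
  -- assemble
  have hdisj : Disjoint Eab Eba := by
    rw [Finset.disjoint_left]
    intro v hv hv'
    rw [hEab, Finset.mem_filter] at hv
    rw [hEba, Finset.mem_filter] at hv'
    exact hv.2.2 hv'.2.1
  have hunion : Finset.univ.filter (fun v => crossP T a b v) = Eab ∪ Eba := by
    rw [hEab, hEba, ← Finset.filter_or]
    simp only [crossP]
    apply Finset.filter_congr_decidable
  rw [crossSum, hunion, Finset.sum_union hdisj]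
  calc dist (f a) (f b) ≤ dist (f a) (f m) + dist (f m) (f b) := dist_triangle _ _ _
    _ = dist (f a) (f m) + dist (f b) (f m) := by rw [dist_comm (f m)]
    _ ≤ _ := add_le_add hsum_a hsum_b

def finRot {n : ℕ} (i : Fin n) : Fin n :=
  ⟨((i : ℕ) + 1) % n, Nat.mod_lt _ i.pos⟩

lemma list_sum_map_get {α β : Type*} [AddCommMonoid β] (l : List α) (φ : α → β) :
    (l.map φ).sum = ∑ i : Fin l.length, φ (l.get i) := by
  conv_lhs => rw [← List.ofFn_get l]
  rw [List.map_ofFn, List.sum_ofFn]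
  rfl

lemma cycleWeight_eq {V X : Type} [MetricSpace X] (f : V → X) (h : List V) :
    cycleWeight f h = ∑ i : Fin h.length, dist (f (h.get i)) (f (h.get (finRot i))) := by
  rw [cycleWeight, list_sum_map_get]
  have hlen : (h.zip (h.rotate 1)).length = h.length := by
    simp [List.length_zip, List.length_rotate]
  rw [← Fin.sum_congr' (fun i : Fin h.length => dist (f (h.get i)) (f (h.get (finRot i)))) hlen]
  apply Finset.sum_congr rfl
  intro i _
  simp only [List.get_eq_getElem, List.getElem_zip, List.getElem_rotate, finRot, Fin.cast,
    Fin.val_mk]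

open Classical in
lemma crossings_le_two {V : Type} (h : List V) (hnd : h.Nodup) (A : Set V)
    (hA : IsCyclicArc A h) :
    (Finset.univ.filter
      (fun i : Fin h.length => ¬(h.get i ∈ A ↔ h.get (finRot i) ∈ A))).card ≤ 2 := by
  obtain ⟨r, hr⟩ := hA
  set n := h.length with hn
  set c := A.ncard with hc
  set m := min c n with hm
  -- membership characterization through the rotated list
  have key : ∀ i : Fin n, (h.get ⟨((i : ℕ) + r) % n, Nat.mod_lt _ i.pos⟩ ∈ A ↔ (i : ℕ) < m) := by
    intro i
    have hmem : h.get ⟨((i : ℕ) + r) % n, Nat.mod_lt _ i.pos⟩ = (h.rotate r).get ⟨i, by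
        rw [List.length_rotate]; exact i.isLt⟩ := by
      rw [List.get_rotate]
    have hA' : ∀ x, x ∈ A ↔ x ∈ (h.rotate r).take c := by
      intro x
      rw [← hr]
      rfl
    rw [hmem, hA']
    have hnd2 : (h.rotate r).Nodup := List.nodup_rotate.mpr hnd
    have hlen2 : (h.rotate r).length = n := by rw [List.length_rotate]
    constructor
    · intro hmem2
      obtain ⟨j, hj⟩ := List.mem_iff_get.mp hmem2
      have hjlt : (j : ℕ) < m := by
        have := j.isLt
        simpa [List.length_take, hlen2, hm] using this
      have : ((h.rotate r).take c).get j = (h.rotate r).get ⟨j, by omega⟩ := by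
        simp [List.get_eq_getElem]
      rw [this] at hj
      have := (List.Nodup.get_inj_iff hnd2).mp hj
      have hji : (j : ℕ) = (i : ℕ) := congrArg Fin.val this
      omega
    · intro hlt
      have h1 : (h.rotate r).get ⟨i, by omega⟩ = ((h.rotate r).take c).get ⟨i, by
          simp [List.length_take, hlen2]; omega⟩ := by
        simp [List.get_eq_getElem]
      rw [h1]
      exact List.get_mem _ _
  -- transfer crossings through the rotation bijection
  set σ : Fin n → Fin n := fun j => ⟨((j : ℕ) + r) % n, Nat.mod_lt _ j.pos⟩ with hσ
  have hσinj : Function.Injective σ := by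
    intro j j' he
    have hv : ((j : ℕ) + r) % n = ((j' : ℕ) + r) % n := congrArg Fin.val he
    have : (j : ℕ) % n = (j' : ℕ) % n :=
      Nat.ModEq.add_right_cancel' r hv
    rw [Nat.mod_eq_of_lt j.isLt, Nat.mod_eq_of_lt j'.isLt] at this
    exact Fin.ext this
  have hσbij : Function.Bijective σ := Finite.injective_iff_bijective.mp hσinj
  have hcomm : ∀ j : Fin n, σ (finRot j) = finRot (σ j) := by
    intro j
    apply Fin.ext
    show (((j : ℕ) + 1) % n + r) % n = (((j : ℕ) + r) % n + 1) % n
    rw [Nat.mod_add_mod, Nat.mod_add_mod]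
    ring_nf
  have hcard : (Finset.univ.filter
      (fun i : Fin n => ¬(h.get i ∈ A ↔ h.get (finRot i) ∈ A))).card =
      (Finset.univ.filter
      (fun j : Fin n => ¬(((j : ℕ) < m) ↔ (((j : ℕ) + 1) % n < m)))).card := by
    apply Finset.card_bij' (fun i _ => (Equiv.ofBijective σ hσbij).symm i)
      (fun j _ => σ j)
    · intro i hi
      simp only [Finset.mem_filter, Finset.mem_univ, true_and] at hi ⊢
      set j := (Equiv.ofBijective σ hσbij).symm i with hj
      have hji : σ j = i := (Equiv.ofBijective σ hσbij).apply_symm_apply i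
      rw [← hji] at hi
      have e1 : h.get (σ j) ∈ A ↔ (j : ℕ) < m := key j
      have e2 : h.get (finRot (σ j)) ∈ A ↔ ((j : ℕ) + 1) % n < m := by
        rw [← hcomm j]
        exact (key (finRot j))
      rw [e1, e2] at hi
      exact hi
    · intro j hj
      simp only [Finset.mem_filter, Finset.mem_univ, true_and] at hj ⊢
      have e1 : h.get (σ j) ∈ A ↔ (j : ℕ) < m := key j
      have e2 : h.get (finRot (σ j)) ∈ A ↔ ((j : ℕ) + 1) % n < m := by
        rw [← hcomm j]
        exact (key (finRot j))
      rw [e1, e2]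
      exact hj
    · intro i _
      exact (Equiv.ofBijective σ hσbij).apply_symm_apply i
    · intro j _
      exact (Equiv.ofBijective σ hσbij).symm_apply_apply j
  rw [hcard]
  have hsub : (Finset.univ.filter
      (fun j : Fin n => ¬(((j : ℕ) < m) ↔ (((j : ℕ) + 1) % n < m)))) ⊆
      (Finset.univ.filter (fun j : Fin n => (j : ℕ) = n - 1)) ∪
      (Finset.univ.filter (fun j : Fin n => (j : ℕ) + 1 = m)) := by
    intro j hj
    simp only [Finset.mem_filter, Finset.mem_univ, true_and] at hj
    simp only [Finset.mem_union, Finset.mem_filter, Finset.mem_univ, true_and]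
    by_cases hlast : (j : ℕ) = n - 1
    · exact Or.inl hlast
    · right
      have hjn : (j : ℕ) + 1 < n := by have := j.isLt; omega
      rw [Nat.mod_eq_of_lt hjn] at hj
      omega
  refine le_trans (Finset.card_le_card hsub) (le_trans (Finset.card_union_le _ _) ?_)
  have c1 : (Finset.univ.filter (fun j : Fin n => (j : ℕ) = n - 1)).card ≤ 1 := by
    apply Finset.card_le_one.mpr
    intro a ha b hb
    simp only [Finset.mem_filter] at ha hb
    apply Fin.ext
    omega
  have c2 : (Finset.univ.filter (fun j : Fin n => (j : ℕ) + 1 = m)).card ≤ 1 := by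
    apply Finset.card_le_one.mpr
    intro a ha b hb
    simp only [Finset.mem_filter] at ha hb
    apply Fin.ext
    omega
  omega

lemma hamLength {V : Type} [Fintype V] [DecidableEq V] {h : List V} (hh : IsHamCycle h) :
    h.length = Fintype.card V := by
  have huniv : h.toFinset = Finset.univ :=
    Finset.eq_univ_iff_forall.mpr (fun x => List.mem_toFinset.mpr (hh.2 x))
  rw [← List.toFinset_card_of_nodup hh.1, huniv, Finset.card_univ]

lemma treeWeight_le_cycleWeight {V X : Type} [Fintype V] [DecidableEq V] [MetricSpace X]
    (f : V → X) (T : ParentTree V) (hmst : IsMST T f)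
    (h' : List V) (hh' : IsHamCycle h') (hpos : 0 < h'.length) :
    treeWeight T f ≤ cycleWeight f h' := by
  classical
  obtain ⟨hnd, hmem⟩ := hh'
  set n := h'.length with hn
  have hidx : ∀ v : V, h'.idxOf v < n := fun v => List.idxOf_lt_length_iff.mpr (hmem v)
  set P : V → V := fun v =>
    if hj : h'.idxOf v + 1 < n then h'.get ⟨h'.idxOf v + 1, hj⟩ else v with hP
  have hstep : ∀ (i : ℕ) (hi : i < n),
      P (h'.get ⟨i, hi⟩) = h'.get ⟨min (i+1) (n-1), by omega⟩ := by
    intro i hi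
    have hio : h'.idxOf (h'.get ⟨i, hi⟩) = i := List.get_idxOf hnd _
    rw [hP]
    simp only [hio]
    split
    · next hj => congr 1; apply Fin.ext; simp; omega
    · next hj => congr 1; apply Fin.ext; simp; omega
  have hiter : ∀ (k i : ℕ) (hi : i < n),
      P^[k] (h'.get ⟨i, hi⟩) = h'.get ⟨min (i+k) (n-1), by omega⟩ := by
    intro k
    induction k with
    | zero =>
      intro i hi
      simp only [Function.iterate_zero, id_eq]
      congr 1; apply Fin.ext; simp; omega
    | succ k ih =>
      intro i hi
      rw [Function.iterate_succ_apply', ih i hi, hstep (min (i+k) (n-1)) (by omega)]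
      congr 1; apply Fin.ext; simp; omega
  set T' : ParentTree V :=
    { root := h'.get ⟨n-1, by omega⟩
      parent := P
      parent_root := by
        rw [hstep (n-1) (by omega)]
        congr 1; apply Fin.ext; simp
      reaches_root := by
        intro v
        refine ⟨n-1, ?_⟩
        have hv : v = h'.get ⟨h'.idxOf v, hidx v⟩ := (List.idxOf_get (hidx v)).symm
        rw [hv, hiter (n-1) _ (hidx v)]
        congr 1; apply Fin.ext; simp } with hT'
  refine le_trans (hmst T') ?_
  rw [cycleWeight_eq]
  set g : Fin h'.length → V := fun i => h'.get i with hg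
  have hgbij : Function.Bijective g := by
    constructor
    · intro i j hij
      exact (List.Nodup.get_inj_iff hnd).mp hij
    · intro v
      obtain ⟨i, hi⟩ := List.mem_iff_get.mp (hmem v)
      exact ⟨i, hi⟩
  have hre : ∑ i : Fin h'.length,
        (if g i ≠ T'.root then dist (f (g i)) (f (T'.parent (g i))) else 0) =
      ∑ v : V, (if v ≠ T'.root then dist (f v) (f (T'.parent v)) else 0) :=
    Fintype.sum_bijective g hgbij _ _ (fun i => rfl)
  rw [treeWeight, Finset.sum_filter, ← hre]
  apply Finset.sum_le_sum
  intro i _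
  by_cases hi : (i : ℕ) = n - 1
  · have hgi : g i = T'.root := by
      show h'.get i = h'.get ⟨n-1, by omega⟩
      congr 1; apply Fin.ext; simpa using hi
    rw [if_neg (by simp [hgi])]
    exact dist_nonneg
  · have hroot : g i ≠ T'.root := by
      intro hc
      apply hi
      have := (List.Nodup.get_inj_iff hnd).mp hc
      exact congrArg Fin.val this
    rw [if_pos hroot]
    apply le_of_eq
    have hpar : T'.parent (g i) = h'.get (finRot i) := by
      show P (h'.get i) = h'.get (finRot i)
      have h1 : h'.get i = h'.get ⟨(i : ℕ), i.isLt⟩ := by congr 1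
      rw [h1, hstep (i : ℕ) i.isLt]
      congr 1
      apply Fin.ext
      show min ((i:ℕ)+1) (n-1) = ((i:ℕ)+1) % n
      have h2 : (i : ℕ) < n := i.isLt
      have h3 : (i : ℕ) + 1 < n := by omega
      rw [Nat.mod_eq_of_lt h3]
      omega
    rw [hpar]


open Classical in
lemma cycleWeight_le_two_treeWeight {V X : Type} [Fintype V] [DecidableEq V] [MetricSpace X]
    (f : V → X) (T : ParentTree V) (h : List V) (hh : IsHamCycle h)
    (hconf : CycleConforms T h) :
    cycleWeight f h ≤ 2 * treeWeight T f := by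
  rw [cycleWeight_eq]
  set g : Fin h.length → V := fun i => h.get i with hg
  set w : V → ℝ := fun v => dist (f v) (f (T.parent v)) with hw
  have hcnt : ∀ v : V,
      (Finset.univ.filter (fun i : Fin h.length => crossP T (g i) (g (finRot i)) v)).card ≤ 2 := by
    intro v
    have h2 := crossings_le_two h hh.1 (T.desc v) (hconf v)
    refine le_trans (le_of_eq ?_) h2
    congr 1
    ext i
    simp only [Finset.mem_filter, Finset.mem_univ, true_and]
    unfold crossP
    constructor
    · intro hc
      tauto
    · intro hc
      tauto
  calc ∑ i : Fin h.length, dist (f (g i)) (f (g (finRot i)))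
      ≤ ∑ i : Fin h.length, crossSum T f (g i) (g (finRot i)) :=
        Finset.sum_le_sum (fun i _ => dist_le_crossSum T f _ _)
    _ = ∑ i : Fin h.length, ∑ v : V, (if crossP T (g i) (g (finRot i)) v then w v else 0) := by
        apply Finset.sum_congr rfl
        intro i _
        rw [crossSum, Finset.sum_filter]
    _ = ∑ v : V, ∑ i : Fin h.length, (if crossP T (g i) (g (finRot i)) v then w v else 0) :=
        Finset.sum_comm
    _ = ∑ v : V, ((Finset.univ.filter
          (fun i : Fin h.length => crossP T (g i) (g (finRot i)) v)).card : ℝ) * w v := by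
        apply Finset.sum_congr rfl
        intro v _
        rw [← Finset.sum_filter, Finset.sum_const, nsmul_eq_mul]
    _ ≤ ∑ v : V, (if v = T.root then 0 else 2 * w v) := by
        apply Finset.sum_le_sum
        intro v _
        by_cases hv : v = T.root
        · rw [if_pos hv]
          have hz : (Finset.univ.filter
              (fun i : Fin h.length => crossP T (g i) (g (finRot i)) v)).card = 0 := by
            rw [Finset.card_eq_zero, Finset.filter_eq_empty_iff]
            intro i _
            rw [hv]
            exact crossP_root_false T _ _
          rw [hz]
          simp
        · rw [if_neg hv]
          have hc : ((Finset.univ.filter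
              (fun i : Fin h.length => crossP T (g i) (g (finRot i)) v)).card : ℝ) ≤ 2 := by
            exact_mod_cast hcnt v
          have hwnn : 0 ≤ w v := dist_nonneg
          nlinarith
    _ = 2 * treeWeight T f := by
        rw [treeWeight, Finset.mul_sum]
        rw [Finset.sum_filter]
        apply Finset.sum_congr rfl
        intro v _
        by_cases hv : v = T.root
        · rw [if_pos hv, if_neg (by simpa using hv)]
        · rw [if_neg hv, if_pos hv]

/-- Every Hamiltonian cycle conforming to a minimum spanning tree has weight at
most twice the minimum weight of a Hamiltonian cycle. -/
theorem stmt4 {V X : Type} [Fintype V] [DecidableEq V] [MetricSpace X]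
    (hn : 3 ≤ Fintype.card V) (f : V → X) (hf : Function.Injective f)
    (T : ParentTree V) (hmst : IsMST T f)
    (h : List V) (hh : IsHamCycle h) (hconf : CycleConforms T h) :
    ∀ h' : List V, IsHamCycle h' → cycleWeight f h ≤ 2 * cycleWeight f h' := by
  intro h' hh'
  have hlen' : h'.length = Fintype.card V := hamLength hh'
  have hpos' : 0 < h'.length := by omega
  calc cycleWeight f h ≤ 2 * treeWeight T f :=
        cycleWeight_le_two_treeWeight f T h hh hconf
    _ ≤ 2 * cycleWeight f h' := by
        have := treeWeight_le_cycleWeight f T hmst h' hh' hpos'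
        linarith
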